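/- Let Q₁ ∈ Pos(Y₁⊗X₁), Q₂ ∈ Pos(Y₂⊗X₂) both be diagonal in the standard basis (the classical case). Define m_i = min{⟨Q_i, X⟩ : X ∈ Pos(Y_i⊗X_i), Tr_{Y_i}(X) = 1_{X_i}} and m = min{⟨Q₁⊗Q₂, X⟩ : X Choi operator of a channel from X₁⊗X₂ to Y₁⊗Y₂ (after reordering factors)}. Then m = m₁·m₂. -/

import Mathlib

open Matrix
open scoped Kronecker ComplexOrder

noncomputable section

/-- `Φ ⊗ id` : apply a linear map `Φ` on `L(X)` to the first tensor factor of `L(X ⊗ Z)`. -/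
def lmapTensorId {n m k : Type*} [Fintype n] [Fintype k]
    (Φ : Matrix n n ℂ →ₗ[ℂ] Matrix m m ℂ)
    (M : Matrix (n × k) (n × k) ℂ) : Matrix (m × k) (m × k) ℂ :=
  fun p q => Φ (fun i j => M (i, p.2) (j, q.2)) p.1 q.1

/-- `id ⊗ Ψ` : apply a linear map `Ψ` on `L(Z)` to the second tensor factor of `L(Y ⊗ Z)`. -/
def idTensorLmap {n k l : Type*} [Fintype n] [Fintype k]
    (Ψ : Matrix k k ℂ →ₗ[ℂ] Matrix l l ℂ)
    (M : Matrix (n × k) (n × k) ℂ) : Matrix (n × l) (n × l) ℂ :=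
  fun p q => Ψ (fun a b => M (p.1, a) (q.1, b)) p.2 q.2

/-- Complete positivity: `Φ ⊗ id_k` maps positive semidefinite operators to positive
semidefinite operators for every finite-dimensional ancilla `k`. -/
def IsCompletelyPositive {n m : Type*} [Fintype n] [Fintype m]
    (Φ : Matrix n n ℂ →ₗ[ℂ] Matrix m m ℂ) : Prop :=
  ∀ (k : Type) [Fintype k] [DecidableEq k],
    ∀ M : Matrix (n × k) (n × k) ℂ, M.PosSemidef → (lmapTensorId Φ M).PosSemidef

def IsTracePreserving {n m : Type*} [Fintype n] [Fintype m]
    (Φ : Matrix n n ℂ →ₗ[ℂ] Matrix m m ℂ) : Prop :=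
  ∀ M : Matrix n n ℂ, (Φ M).trace = M.trace

/-- Partial trace over the first tensor factor. -/
def trFst {n k : Type*} [Fintype n] (M : Matrix (n × k) (n × k) ℂ) : Matrix k k ℂ :=
  fun a b => ∑ i : n, M (i, a) (i, b)

/-- Partial trace over the second tensor factor. -/
def trSnd {n k : Type*} [Fintype k] (M : Matrix (n × k) (n × k) ℂ) : Matrix n n ℂ :=
  fun i j => ∑ a : k, M (i, a) (j, a)

/-- Hilbert-Schmidt inner product `⟨A, B⟩ = Tr(A* B)`. -/
def minner {n : Type*} [Fintype n] (A B : Matrix n n ℂ) : ℂ := (Aᴴ * B).trace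

/-- The square root of a positive semidefinite matrix, as `Matrix.PosSemidef.sqrt` was defined
in Mathlib of December 2024 (removed since). -/
def Matrix.PosSemidef.sqrt {n 𝕜 : Type*} [Fintype n] [DecidableEq n] [RCLike 𝕜]
    {A : Matrix n n 𝕜} (hA : A.PosSemidef) : Matrix n n 𝕜 :=
  hA.1.eigenvectorUnitary.1 * diagonal ((↑) ∘ (√·) ∘ hA.1.eigenvalues) *
    (star hA.1.eigenvectorUnitary : Matrix n n 𝕜)

open Classical in
/-- Square root of a positive semidefinite matrix (junk value `0` otherwise). -/
def msqrt {n : Type*} [Fintype n] [DecidableEq n] (M : Matrix n n ℂ) : Matrix n n ℂ :=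
  if h : M.PosSemidef then h.sqrt else 0

/-- Trace norm `‖M‖₁ = Tr √(M* M)`. -/
def traceNorm {n : Type*} [Fintype n] [DecidableEq n] (M : Matrix n n ℂ) : ℝ :=
  ((Matrix.posSemidef_conjTranspose_mul_self M).sqrt.trace).re

/-- Fidelity `F(Q, R) = ‖√Q √R‖₁` of positive semidefinite matrices. -/
def fid {n : Type*} [Fintype n] [DecidableEq n] (Q R : Matrix n n ℂ) : ℝ :=
  traceNorm (msqrt Q * msqrt R)

/-- Choi-Jamiolkowski operator `J(Φ) = Σ_{i,j} Φ(|i⟩⟨j|) ⊗ |i⟩⟨j|`. -/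
def choi {n m : Type*} [Fintype n] [DecidableEq n] [Fintype m]
    (Φ : Matrix n n ℂ →ₗ[ℂ] Matrix m m ℂ) : Matrix (m × n) (m × n) ℂ :=
  fun p q => Φ (Matrix.single p.2 q.2 1) p.1 q.1

/-- Tensor product of vectors. -/
def tensorVec {α β : Type*} (v : α → ℂ) (w : β → ℂ) : α × β → ℂ := fun p => v p.1 * w p.2

/-- `u = (|00⟩ + |11⟩)/√2`. -/
def uVec : Fin 2 × Fin 2 → ℂ := fun p =>
  if p = (0, 0) then (Real.sqrt 2 : ℂ)⁻¹ else if p = (1, 1) then (Real.sqrt 2 : ℂ)⁻¹ else 0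

/-- `v = cos(π/8)|00⟩ + sin(π/8)|11⟩`. -/
def vVec : Fin 2 × Fin 2 → ℂ := fun p =>
  if p = (0, 0) then (Real.cos (Real.pi / 8) : ℂ)
  else if p = (1, 1) then (Real.sin (Real.pi / 8) : ℂ) else 0

/-- `w = -sin(π/8)|00⟩ + cos(π/8)|11⟩`. -/
def wVec : Fin 2 × Fin 2 → ℂ := fun p =>
  if p = (0, 0) then -(Real.sin (Real.pi / 8) : ℂ)
  else if p = (1, 1) then (Real.cos (Real.pi / 8) : ℂ) else 0


section Aux

lemma aux_kron_conjTranspose {n m : Type*} (A : Matrix n n ℂ) (B : Matrix m m ℂ) :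
    (A ⊗ₖ B)ᴴ = Aᴴ ⊗ₖ Bᴴ := by
  ext p q
  simp [Matrix.conjTranspose_apply, Matrix.kroneckerMap_apply]

lemma aux_psd_kron {n m : Type*} [Fintype n] [DecidableEq n] [Fintype m] [DecidableEq m]
    {A : Matrix n n ℂ} {B : Matrix m m ℂ} (hA : A.PosSemidef) (hB : B.PosSemidef) :
    (A ⊗ₖ B).PosSemidef := by
  exact hA.kronecker hB

lemma aux_psd_diag_entry {n : Type*} [Fintype n] [DecidableEq n] {M : Matrix n n ℂ}
    (hM : M.PosSemidef) (p : n) : M p p = ((M p p).re : ℂ) ∧ 0 ≤ (M p p).re := by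
  have h := hM.dotProduct_mulVec_nonneg (Pi.single p 1)
  have he : dotProduct (star (Pi.single p 1)) (M *ᵥ (Pi.single p 1 : n → ℂ)) = M p p := by
    simp [dotProduct, Matrix.mulVec, Pi.single_apply, Finset.mul_sum]
  rw [he] at h
  rw [Complex.le_def] at h
  refine ⟨?_, by simpa using h.1⟩
  apply Complex.ext <;> simp [← h.2]

lemma aux_minner_diag {n : Type*} [Fintype n] [DecidableEq n] {Q : Matrix n n ℂ}
    (hQ : Q.PosSemidef) (hd : Q.IsDiag) (X : Matrix n n ℂ) :
    minner Q X = ∑ p, Q p p * X p p := by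
  unfold minner Matrix.trace
  simp only [Matrix.diag_apply, Matrix.mul_apply, Matrix.conjTranspose_apply]
  refine Finset.sum_congr rfl fun p _ => ?_
  rw [Finset.sum_eq_single p]
  · have : (Qᴴ : Matrix n n ℂ) p p = Q p p := by rw [hQ.1.eq]
    rw [Matrix.conjTranspose_apply] at this
    rw [this]
  · intro r _ hr
    rw [hd hr]
    simp
  · simp

lemma aux_minner_re {n : Type*} [Fintype n] [DecidableEq n] {Q X : Matrix n n ℂ}
    (hQ : Q.PosSemidef) (hd : Q.IsDiag) (hX : X.PosSemidef) :
    minner Q X = ((∑ p, (Q p p).re * (X p p).re : ℝ) : ℂ) := by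
  rw [aux_minner_diag hQ hd]
  push_cast
  refine Finset.sum_congr rfl fun p _ => ?_
  rw [(aux_psd_diag_entry hQ p).1, (aux_psd_diag_entry hX p).1]
  norm_num

/-- From the `IsLeast` hypothesis for a single-system SDP, extract a "row minimum"
function `c` with `m ≤ ∑ c` and `c i ≤ q (a, i)` for all `a`. -/
lemma aux_exists_c {y x : Type*} [Fintype y] [DecidableEq y] [Fintype x] [DecidableEq x]
    {Q : Matrix (y × x) (y × x) ℂ} (hQ : Q.PosSemidef) (hd : Q.IsDiag) {m : ℝ}
    (hm : IsLeast {r : ℝ | ∃ X : Matrix (y × x) (y × x) ℂ,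
      X.PosSemidef ∧ trFst X = 1 ∧ r = (minner Q X).re} m) :
    ∃ c : x → ℝ, (∀ i, 0 ≤ c i) ∧ m ≤ ∑ i, c i ∧
      ∀ (a : y) (i : x), c i ≤ (Q (a, i) (a, i)).re := by
  obtain ⟨X, hX, htr, hr⟩ := hm.1
  by_cases hx : IsEmpty x
  · refine ⟨fun _ => 0, fun i => le_rfl, ?_, fun a i => (hx.false i).elim⟩
    have hempty : IsEmpty (y × x) := ⟨fun p => hx.false p.2⟩
    have : minner Q X = 0 := by
      unfold minner Matrix.trace
      simp
    simp [hr, this]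
  · rw [not_isEmpty_iff] at hx
    have hy : Nonempty y := by
      by_contra hny
      rw [not_nonempty_iff] at hny
      obtain ⟨i⟩ := hx
      have := congrFun (congrFun htr i) i
      simp [trFst, Matrix.one_apply] at this
    have hne : (Finset.univ : Finset y).Nonempty := Finset.univ_nonempty
    set c : x → ℝ := fun i => Finset.univ.inf' hne (fun a => (Q (a, i) (a, i)).re) with hc
    have hpick : ∀ i : x, ∃ a : y, c i = (Q (a, i) (a, i)).re := by
      intro i
      obtain ⟨a, _, ha⟩ := Finset.exists_mem_eq_inf' hne (fun a => (Q (a, i) (a, i)).re)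
      exact ⟨a, ha⟩
    choose pick hpick using hpick
    have hcle : ∀ (a : y) (i : x), c i ≤ (Q (a, i) (a, i)).re := fun a i =>
      Finset.inf'_le _ (Finset.mem_univ a)
    have hcnonneg : ∀ i, 0 ≤ c i := fun i =>
      (hpick i) ▸ (aux_psd_diag_entry hQ (pick i, i)).2
    refine ⟨c, hcnonneg, ?_, hcle⟩
    -- the feasible point: diagonal matrix picking the minimizing row
    set d : y × x → ℂ := fun p => if p.1 = pick p.2 then 1 else 0 with hdDef
    have hdnn : 0 ≤ d := by
      intro p
      by_cases hp : p.1 = pick p.2 <;> simp [hdDef, hp]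
    have hpsd : (Matrix.diagonal d).PosSemidef := Matrix.PosSemidef.diagonal hdnn
    have htr' : trFst (Matrix.diagonal d) = 1 := by
      ext i i'
      unfold trFst
      by_cases hii : i = i'
      · subst hii
        simp [Matrix.diagonal_apply, hdDef, Matrix.one_apply]
      · have : ∀ a : y, Matrix.diagonal d (a, i) (a, i') = 0 := by
          intro a
          rw [Matrix.diagonal_apply_ne]
          simp [Prod.ext_iff, hii]
        simp [this, Matrix.one_apply, hii]
    have hval : (minner Q (Matrix.diagonal d)).re = ∑ i, c i := by
      rw [aux_minner_diag hQ hd]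
      have hterm : ∀ p : y × x, Q p p * Matrix.diagonal d p p =
          if p.1 = pick p.2 then Q p p else 0 := by
        intro p
        rw [Matrix.diagonal_apply_eq]
        by_cases hp : p.1 = pick p.2 <;> simp [hdDef, hp]
      rw [Finset.sum_congr rfl fun p _ => hterm p]
      rw [Complex.re_sum]
      rw [Fintype.sum_prod_type]
      rw [Finset.sum_comm]
      refine Finset.sum_congr rfl fun i _ => ?_
      rw [Finset.sum_eq_single (pick i)]
      · simp [hpick i]
      · intro a _ ha; simp [ha]
      · simp
    exact hm.2 ⟨Matrix.diagonal d, hpsd, htr', hval.symm⟩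

end Aux

/-- In the classical (diagonal) case the minimum-outcome SDP is multiplicative:
`m = m₁ · m₂`. -/
theorem stmt17 {y₁ x₁ y₂ x₂ : Type*}
    [Fintype y₁] [DecidableEq y₁] [Fintype x₁] [DecidableEq x₁]
    [Fintype y₂] [DecidableEq y₂] [Fintype x₂] [DecidableEq x₂]
    (Q₁ : Matrix (y₁ × x₁) (y₁ × x₁) ℂ) (hQ₁ : Q₁.PosSemidef) (hQ₁diag : Q₁.IsDiag)
    (Q₂ : Matrix (y₂ × x₂) (y₂ × x₂) ℂ) (hQ₂ : Q₂.PosSemidef) (hQ₂diag : Q₂.IsDiag)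
    (m₁ m₂ m : ℝ)
    (h₁ : IsLeast {r : ℝ | ∃ X : Matrix (y₁ × x₁) (y₁ × x₁) ℂ,
      X.PosSemidef ∧ trFst X = 1 ∧ r = (minner Q₁ X).re} m₁)
    (h₂ : IsLeast {r : ℝ | ∃ X : Matrix (y₂ × x₂) (y₂ × x₂) ℂ,
      X.PosSemidef ∧ trFst X = 1 ∧ r = (minner Q₂ X).re} m₂)
    (h : IsLeast {r : ℝ | ∃ X : Matrix ((y₁ × x₁) × y₂ × x₂) ((y₁ × x₁) × y₂ × x₂) ℂ,
      X.PosSemidef ∧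
      (fun (p q : x₁ × x₂) => ∑ a : y₁, ∑ b : y₂,
        X ((a, p.1), (b, p.2)) ((a, q.1), (b, q.2))) = (1 : Matrix (x₁ × x₂) (x₁ × x₂) ℂ) ∧
      r = (minner (Q₁ ⊗ₖ Q₂) X).re} m) :
    m = m₁ * m₂ := by
  have hQk : (Q₁ ⊗ₖ Q₂).PosSemidef := aux_psd_kron hQ₁ hQ₂
  have hQkd : (Q₁ ⊗ₖ Q₂).IsDiag := hQ₁diag.kronecker hQ₂diag
  refine le_antisymm ?_ ?_
  · -- m ≤ m₁ * m₂ : tensor the two optimal solutions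
    obtain ⟨X₁, hX₁, ht₁, hr₁⟩ := h₁.1
    obtain ⟨X₂, hX₂, ht₂, hr₂⟩ := h₂.1
    refine h.2 ⟨X₁ ⊗ₖ X₂, aux_psd_kron hX₁ hX₂, ?_, ?_⟩
    · ext ⟨i, j⟩ ⟨i', j'⟩
      have : ∑ a : y₁, ∑ b : y₂, (X₁ ⊗ₖ X₂) ((a, i), (b, j)) ((a, i'), (b, j'))
          = trFst X₁ i i' * trFst X₂ j j' := by
        simp only [Matrix.kroneckerMap_apply, trFst, Finset.sum_mul, Finset.mul_sum]
        exact Finset.sum_comm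
      simp only [this, ht₁, ht₂, Matrix.one_apply, Prod.ext_iff]
      by_cases hii : i = i' <;> by_cases hjj : j = j' <;> simp [hii, hjj]
    · have hmul : minner (Q₁ ⊗ₖ Q₂) (X₁ ⊗ₖ X₂) = minner Q₁ X₁ * minner Q₂ X₂ := by
        unfold minner
        rw [aux_kron_conjTranspose, ← Matrix.mul_kronecker_mul, Matrix.trace_kronecker]
      rw [hmul, aux_minner_re hQ₁ hQ₁diag hX₁, aux_minner_re hQ₂ hQ₂diag hX₂,
        ← Complex.ofReal_mul, Complex.ofReal_re, hr₁, hr₂,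
        aux_minner_re hQ₁ hQ₁diag hX₁, aux_minner_re hQ₂ hQ₂diag hX₂,
        Complex.ofReal_re, Complex.ofReal_re]
  · -- m₁ * m₂ ≤ m : bound any feasible solution below
    obtain ⟨c₁, hc₁nn, hc₁le, hc₁b⟩ := aux_exists_c hQ₁ hQ₁diag h₁
    obtain ⟨c₂, hc₂nn, hc₂le, hc₂b⟩ := aux_exists_c hQ₂ hQ₂diag h₂
    obtain ⟨X, hX, hct, hr⟩ := h.1
    have hm : m = ∑ p : (y₁ × x₁) × y₂ × x₂,
        ((Q₁ ⊗ₖ Q₂) p p).re * (X p p).re := by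
      rw [hr, aux_minner_re hQk hQkd hX, Complex.ofReal_re]
    have hxnn : ∀ p, 0 ≤ (X p p).re := fun p => (aux_psd_diag_entry hX p).2
    have hstep : ∀ p : (y₁ × x₁) × y₂ × x₂,
        c₁ p.1.2 * c₂ p.2.2 * (X p p).re ≤ ((Q₁ ⊗ₖ Q₂) p p).re * (X p p).re := by
      rintro ⟨⟨a, i⟩, b, j⟩
      have hq : ((Q₁ ⊗ₖ Q₂) ((a, i), (b, j)) ((a, i), (b, j))).re
          = (Q₁ (a, i) (a, i)).re * (Q₂ (b, j) (b, j)).re := by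
        rw [show (Q₁ ⊗ₖ Q₂) ((a, i), (b, j)) ((a, i), (b, j))
            = Q₁ (a, i) (a, i) * Q₂ (b, j) (b, j) from rfl,
          (aux_psd_diag_entry hQ₁ (a, i)).1, (aux_psd_diag_entry hQ₂ (b, j)).1,
          ← Complex.ofReal_mul, Complex.ofReal_re]
        simp
      rw [hq]
      refine mul_le_mul_of_nonneg_right ?_ (hxnn _)
      exact mul_le_mul (hc₁b a i) (hc₂b b j) (hc₂nn j)
        ((hc₁nn i).trans (hc₁b a i))
    have hsum : ∑ p : (y₁ × x₁) × y₂ × x₂, c₁ p.1.2 * c₂ p.2.2 * (X p p).re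
        = (∑ i, c₁ i) * (∑ j, c₂ j) := by
      have hre : ∀ (i : x₁) (j : x₂),
          ∑ a : y₁, ∑ b : y₂, (X ((a, i), (b, j)) ((a, i), (b, j))).re = 1 := by
        intro i j
        have := congrFun (congrFun hct (i, j)) (i, j)
        have h1 : (∑ a : y₁, ∑ b : y₂, X ((a, i), (b, j)) ((a, i), (b, j))).re = 1 := by
          rw [this]; simp [Matrix.one_apply]
        rw [Complex.re_sum] at h1
        rw [← h1]
        exact Finset.sum_congr rfl fun a _ => (Complex.re_sum _ _).symm
      have hEq := Fintype.sum_equiv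
        (⟨fun p => ((p.1.2, p.2.2), (p.1.1, p.2.1)),
          fun q => ((q.2.1, q.1.1), (q.2.2, q.1.2)),
          fun p => rfl, fun q => rfl⟩ : ((y₁ × x₁) × y₂ × x₂) ≃ ((x₁ × x₂) × y₁ × y₂))
        (fun p : (y₁ × x₁) × y₂ × x₂ => c₁ p.1.2 * c₂ p.2.2 * (X p p).re)
        (fun q => c₁ q.1.1 * c₂ q.1.2 *
          (X ((q.2.1, q.1.1), (q.2.2, q.1.2)) ((q.2.1, q.1.1), (q.2.2, q.1.2))).re)
        (fun ⟨⟨a, i⟩, b, j⟩ => rfl)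
      calc ∑ p : (y₁ × x₁) × y₂ × x₂, c₁ p.1.2 * c₂ p.2.2 * (X p p).re
          = ∑ q : (x₁ × x₂) × y₁ × y₂, c₁ q.1.1 * c₂ q.1.2 *
              (X ((q.2.1, q.1.1), (q.2.2, q.1.2)) ((q.2.1, q.1.1), (q.2.2, q.1.2))).re := hEq
        _ = ∑ ij : x₁ × x₂, ∑ ab : y₁ × y₂, c₁ ij.1 * c₂ ij.2 *
              (X ((ab.1, ij.1), (ab.2, ij.2)) ((ab.1, ij.1), (ab.2, ij.2))).re := by
            rw [Fintype.sum_prod_type]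
        _ = ∑ ij : x₁ × x₂, c₁ ij.1 * c₂ ij.2 := by
            refine Finset.sum_congr rfl fun ij _ => ?_
            rw [← Finset.mul_sum, Fintype.sum_prod_type, hre ij.1 ij.2, mul_one]
        _ = ∑ i : x₁, ∑ j : x₂, c₁ i * c₂ j := by rw [Fintype.sum_prod_type]
        _ = (∑ i, c₁ i) * (∑ j, c₂ j) := by rw [Finset.sum_mul_sum]
    have : (∑ i, c₁ i) * (∑ j, c₂ j) ≤ m := by
      rw [hm, ← hsum]
      exact Finset.sum_le_sum fun p _ => hstep p
    refine le_trans ?_ this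
    have hm₂nn : 0 ≤ m₂ := by
      obtain ⟨X₂, hX₂, _, hr₂⟩ := h₂.1
      rw [hr₂, aux_minner_re hQ₂ hQ₂diag hX₂, Complex.ofReal_re]
      exact Finset.sum_nonneg fun p _ => mul_nonneg (aux_psd_diag_entry hQ₂ p).2
        (aux_psd_diag_entry hX₂ p).2
    exact mul_le_mul hc₁le hc₂le hm₂nn (Finset.sum_nonneg fun i _ => hc₁nn i)

end
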